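/- arXiv:2006.02175 — 3 statements merged into one kernel-verified Lean document; each statement's English description precedes it below -/
import Mathlib

section
/- For every real x with 1 ≤ x ≤ √5/2, the quantity −1 + x + ln(2/(x+1)) − 0.24·(x²−1) is nonnegative. -/
theorem stmt_8 (x : ℝ) (hx1 : 1 ≤ x) (hx2 : x ≤ Real.sqrt 5 / 2) :
    0 ≤ -1 + x + Real.log (2 / (x + 1)) - 0.24 * (x ^ 2 - 1) := by
  have h5 : Real.sqrt 5 ≤ 2.2361 := by
    nlinarith [Real.sq_sqrt (by norm_num : (0:ℝ) ≤ 5), Real.sqrt_nonneg 5]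
  have hx : x ≤ 1.11805 := by linarith
  set t : ℝ := (x + 1) / 2 with ht
  have ht1 : (1:ℝ) ≤ t := by rw [ht]; linarith
  have ht0 : (0:ℝ) < t := by linarith
  set y : ℝ := (t ^ 2 - 1) / (2 * t) with hy
  have hy0 : 0 ≤ y := by
    apply div_nonneg _ (by linarith)
    nlinarith
  have hquad := Real.quadratic_le_exp_of_nonneg hy0
  have hty : t ≤ Real.exp y := by
    refine le_trans ?_ hquad
    have : 1 + y + y ^ 2 / 2 - t = (t - 1) ^ 4 / (8 * t ^ 2) := by
      rw [hy]; field_simp; ring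
    nlinarith [pow_le_pow_left₀ (by positivity : (0:ℝ) ≤ (t-1)^2) (le_refl ((t-1)^2)) 1,
      div_nonneg (pow_nonneg (by linarith : (0:ℝ) ≤ t - 1) 4) (by positivity : (0:ℝ) ≤ 8 * t ^ 2)]
  have hlog : Real.log t ≤ y := by
    calc Real.log t ≤ Real.log (Real.exp y) := Real.log_le_log ht0 hty
    _ = y := Real.log_exp y
  have hrw : Real.log (2 / (x + 1)) = - Real.log t := by
    rw [ht, ← Real.log_inv]
    norm_num
  rw [hrw]
  have hyval : y = (x - 1) * (x + 3) / (4 * (x + 1)) := by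
    rw [hy, ht]; field_simp; ring
  rw [hyval] at hlog
  have hx1' : (0:ℝ) < x + 1 := by linarith
  have key : (x - 1) * (x + 3) / (4 * (x + 1)) ≤ (x - 1) - 0.24 * (x ^ 2 - 1) := by
    rw [div_le_iff₀ (by linarith)]
    nlinarith [sq_nonneg (x - 1), mul_nonneg (sub_nonneg.2 hx1) (sub_nonneg.2 hx1)]
  linarith
end

section
/- Let k be a positive integer and let Δ_k be the set of vectors v ∈ ℝ^k such that ‖v‖² ≤ 6 and √k·v_j is an integer for every coordinate j. Then |Δ_k| ≤ 2^{5.5·k}. -/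
open Finset

lemma geo (N : ℕ) : ∑ a ∈ Finset.Icc 1 N, ((4:ℝ)/9)^a ≤ 4/5 := by
  have h : ∑ a ∈ Finset.Ico 1 (N+1), ((4:ℝ)/9)^a ≤ (4/9)^1 / (1-4/9) :=
    geom_sum_Ico_le_of_lt_one (by norm_num) (by norm_num)
  rw [← Finset.Ico_add_one_right_eq_Icc]
  calc ∑ a ∈ Finset.Ico 1 (N+1), ((4:ℝ)/9)^a ≤ (4/9)^1/(1-4/9) := h
    _ = 4/5 := by norm_num

lemma term_bd {a : ℕ} (ha : 1 ≤ a) : ((2:ℝ)/3)^(a^2) ≤ (3/2)*(4/9)^a := by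
  have h1 : ((2:ℝ)/3)^(a^2) ≤ ((2:ℝ)/3)^(2*a-1) := by
    apply pow_le_pow_of_le_one (by norm_num) (by norm_num)
    obtain ⟨b, rfl⟩ := Nat.exists_eq_add_of_le ha
    have h : 2*(1+b)-1 = 2*b+1 := by omega
    rw [h]; nlinarith [sq_nonneg b]
  have h2 : ((2:ℝ)/3)^(2*a-1) = (3/2)*(4/9)^a := by
    have he : 2*a-1+1 = 2*a := by omega
    have h3 : ((2:ℝ)/3)^(2*a-1) * (2/3) = ((4:ℝ)/9)^a := by
      rw [← pow_succ, he, pow_mul]; norm_num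
    nlinarith [h3]
  linarith

def F (N : ℕ) : Finset ℤ :=
  {0} ∪ (Finset.Icc 1 N).image (fun a : ℕ => (a:ℤ)) ∪ (Finset.Icc 1 N).image (fun a : ℕ => -(a:ℤ))

lemma mem_F {N : ℕ} {m : ℤ} (h : m.natAbs ≤ N) : m ∈ F N := by
  rcases eq_or_ne m 0 with rfl | h0
  · simp [F]
  · have h1 : 1 ≤ m.natAbs := Nat.one_le_iff_ne_zero.mpr (Int.natAbs_ne_zero.mpr h0)
    rcases Int.natAbs_eq m with he | he
    · simp only [F, Finset.mem_union, Finset.mem_image]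
      exact Or.inl (Or.inr ⟨m.natAbs, Finset.mem_Icc.mpr ⟨h1, h⟩, he.symm⟩)
    · simp only [F, Finset.mem_union, Finset.mem_image]
      exact Or.inr ⟨m.natAbs, Finset.mem_Icc.mpr ⟨h1, h⟩, by omega⟩

lemma theta_bd (N : ℕ) : ∑ m ∈ F N, ((2:ℝ)/3)^(m.natAbs^2) ≤ 17/5 := by
  have hnn : ∀ m : ℤ, (0:ℝ) ≤ ((2:ℝ)/3)^(m.natAbs^2) := fun m => by positivity
  have key : ∀ (s t : Finset ℤ), ∑ m ∈ s ∪ t, ((2:ℝ)/3)^(m.natAbs^2) ≤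
      (∑ m ∈ s, ((2:ℝ)/3)^(m.natAbs^2)) + ∑ m ∈ t, ((2:ℝ)/3)^(m.natAbs^2) := by
    intro s t
    rw [← Finset.union_sdiff_self_eq_union, Finset.sum_union Finset.disjoint_sdiff]
    have := Finset.sum_le_sum_of_subset_of_nonneg (Finset.sdiff_subset (s := t) (t := s)) (fun m _ _ => hnn m)
    linarith
  have himg : ∀ g : ℕ → ℤ, Function.Injective g →
      ∑ m ∈ (Finset.Icc 1 N).image g, ((2:ℝ)/3)^(m.natAbs^2) ≤ 6/5 → True := fun _ _ _ => trivial
  have hpos : ∑ m ∈ (Finset.Icc 1 N).image (fun a : ℕ => (a:ℤ)), ((2:ℝ)/3)^(m.natAbs^2) ≤ 6/5 := by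
    rw [Finset.sum_image (by intro a _ b _ h; simp only at h; exact_mod_cast h)]
    calc ∑ a ∈ Finset.Icc 1 N, ((2:ℝ)/3)^((a:ℤ).natAbs^2)
        ≤ ∑ a ∈ Finset.Icc 1 N, (3/2)*((4:ℝ)/9)^a := by
          apply Finset.sum_le_sum
          intro a ha
          simpa using term_bd (Finset.mem_Icc.mp ha).1
      _ = (3/2) * ∑ a ∈ Finset.Icc 1 N, ((4:ℝ)/9)^a := by rw [Finset.mul_sum]
      _ ≤ 6/5 := by linarith [geo N]
  have hneg : ∑ m ∈ (Finset.Icc 1 N).image (fun a : ℕ => -(a:ℤ)), ((2:ℝ)/3)^(m.natAbs^2) ≤ 6/5 := by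
    rw [Finset.sum_image (by intro a _ b _ h; simp only at h; omega)]
    calc ∑ a ∈ Finset.Icc 1 N, ((2:ℝ)/3)^((-(a:ℤ)).natAbs^2)
        ≤ ∑ a ∈ Finset.Icc 1 N, (3/2)*((4:ℝ)/9)^a := by
          apply Finset.sum_le_sum
          intro a ha
          simpa using term_bd (Finset.mem_Icc.mp ha).1
      _ = (3/2) * ∑ a ∈ Finset.Icc 1 N, ((4:ℝ)/9)^a := by rw [Finset.mul_sum]
      _ ≤ 6/5 := by linarith [geo N]
  have h0 : ∑ m ∈ ({0} : Finset ℤ), ((2:ℝ)/3)^(m.natAbs^2) = 1 := by simp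
  calc ∑ m ∈ F N, ((2:ℝ)/3)^(m.natAbs^2)
      ≤ (∑ m ∈ ({0} ∪ (Finset.Icc 1 N).image (fun a : ℕ => (a:ℤ)) : Finset ℤ), ((2:ℝ)/3)^(m.natAbs^2))
        + ∑ m ∈ (Finset.Icc 1 N).image (fun a : ℕ => -(a:ℤ)), ((2:ℝ)/3)^(m.natAbs^2) := key _ _
    _ ≤ 1 + 6/5 + 6/5 := by
        have := key {0} ((Finset.Icc 1 N).image (fun a : ℕ => (a:ℤ)))
        linarith
    _ = 17/5 := by norm_num

lemma card_T (k : ℕ) :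
    (((Fintype.piFinset fun _ : Fin k => F (6*k)).filter
        (fun n : Fin k → ℤ => ∑ j, (n j)^2 ≤ 6*k)).card : ℝ)
      ≤ (3/2)^(6*k) * (17/5)^k := by
  set T := (Fintype.piFinset fun _ : Fin k => F (6*k)).filter
      (fun n : Fin k → ℤ => ∑ j, (n j)^2 ≤ 6*k) with hT
  have step1 : ∀ n ∈ T, (1:ℝ) ≤ (3/2)^(6*k) * ∏ j, ((2:ℝ)/3)^((n j).natAbs^2) := by
    intro n hn
    have hsum : (∑ j, (n j).natAbs^2) ≤ 6*k := by
      have h1 : ∑ j, (n j)^2 ≤ (6*k : ℤ) := by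
        have := (Finset.mem_filter.mp hn).2
        exact_mod_cast this
      have h2 : ((∑ j, (n j).natAbs^2 : ℕ) : ℤ) = ∑ j, (n j)^2 := by
        push_cast
        exact Finset.sum_congr rfl fun j _ => sq_abs _
      omega
    rw [Finset.prod_pow_eq_pow_sum]
    have h3 : ((2:ℝ)/3)^(6*k) ≤ ((2:ℝ)/3)^(∑ j, (n j).natAbs^2) :=
      pow_le_pow_of_le_one (by norm_num) (by norm_num) hsum
    have h4 : ((3:ℝ)/2)^(6*k) * ((2:ℝ)/3)^(6*k) = 1 := by
      rw [← mul_pow]; norm_num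
    nlinarith [pow_pos (show (0:ℝ) < 3/2 by norm_num) (6*k)]
  calc (T.card : ℝ) = ∑ n ∈ T, (1:ℝ) := by simp
    _ ≤ ∑ n ∈ T, (3/2)^(6*k) * ∏ j, ((2:ℝ)/3)^((n j).natAbs^2) := Finset.sum_le_sum step1
    _ = (3/2)^(6*k) * ∑ n ∈ T, ∏ j, ((2:ℝ)/3)^((n j).natAbs^2) := by rw [Finset.mul_sum]
    _ ≤ (3/2)^(6*k) * ∑ n ∈ Fintype.piFinset (fun _ : Fin k => F (6*k)),
          ∏ j, ((2:ℝ)/3)^((n j).natAbs^2) := by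
        apply mul_le_mul_of_nonneg_left _ (by positivity)
        apply Finset.sum_le_sum_of_subset_of_nonneg (Finset.filter_subset _ _)
        intro n _ _
        positivity
    _ = (3/2)^(6*k) * ∏ j : Fin k, ∑ m ∈ F (6*k), ((2:ℝ)/3)^(m.natAbs^2) := by
        rw [Finset.prod_univ_sum]
    _ = (3/2)^(6*k) * (∑ m ∈ F (6*k), ((2:ℝ)/3)^(m.natAbs^2))^k := by
        rw [Finset.prod_const, Finset.card_univ, Fintype.card_fin]
    _ ≤ (3/2)^(6*k) * (17/5)^k := by
        apply mul_le_mul_of_nonneg_left _ (by positivity)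
        apply pow_le_pow_left₀ (Finset.sum_nonneg fun m _ => by positivity) (theta_bd (6*k))

theorem stmt_10 (k : ℕ) (hk : 0 < k) :
    ({v : Fin k → ℝ | (∑ j, v j ^ 2) ≤ 6 ∧ ∀ j, ∃ n : ℤ, Real.sqrt k * v j = n} : Set (Fin k → ℝ)).Finite ∧
    (({v : Fin k → ℝ | (∑ j, v j ^ 2) ≤ 6 ∧ ∀ j, ∃ n : ℤ, Real.sqrt k * v j = n} : Set (Fin k → ℝ)).ncard : ℝ)
      ≤ (2 : ℝ) ^ ((5.5 : ℝ) * k) := by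
  set S := ({v : Fin k → ℝ | (∑ j, v j ^ 2) ≤ 6 ∧ ∀ j, ∃ n : ℤ, Real.sqrt k * v j = n} : Set (Fin k → ℝ)) with hS
  set T := (Fintype.piFinset fun _ : Fin k => F (6*k)).filter
      (fun n : Fin k → ℤ => ∑ j, (n j)^2 ≤ 6*k) with hT
  set g : (Fin k → ℤ) → (Fin k → ℝ) := fun n j => (n j : ℝ) / Real.sqrt k with hg
  have hks : (0:ℝ) < Real.sqrt k := Real.sqrt_pos.mpr (by exact_mod_cast hk)
  have hsub : S ⊆ g '' ↑T := by
    intro v hv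
    obtain ⟨hv1, hv2⟩ := hv
    choose n hn using hv2
    have hvj : ∀ j, v j = (n j : ℝ) / Real.sqrt k := by
      intro j
      rw [← hn j, mul_div_cancel_left₀ _ hks.ne']
    have hsumZ : ∑ j, (n j)^2 ≤ (6*k : ℤ) := by
      have hR : (∑ j, ((n j : ℝ))^2) ≤ 6*k := by
        calc (∑ j, ((n j : ℝ))^2) = ∑ j, (k : ℝ) * (v j)^2 := by
              apply Finset.sum_congr rfl
              intro j _
              rw [← hn j, mul_pow, Real.sq_sqrt (by positivity)]
            _ = (k:ℝ) * ∑ j, (v j)^2 := by rw [Finset.mul_sum]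
            _ ≤ (k:ℝ) * 6 := by
                apply mul_le_mul_of_nonneg_left hv1 (by positivity)
            _ = 6*k := by ring
      exact_mod_cast hR
    have hmem : n ∈ T := by
      rw [hT, Finset.mem_filter]
      refine ⟨Fintype.mem_piFinset.mpr fun j => ?_, hsumZ⟩
      apply mem_F
      have hle : (n j)^2 ≤ (6*k : ℤ) := by
        refine le_trans ?_ hsumZ
        simpa using Finset.single_le_sum (f := fun j => (n j)^2) (fun i _ => sq_nonneg _)
          (Finset.mem_univ j)
      have h5 : (n j).natAbs^2 ≤ 6*k := by
        have h6 : (((n j).natAbs^2 : ℕ) : ℤ) ≤ ((6*k : ℕ) : ℤ) := by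
          push_cast
          rw [sq_abs]
          exact_mod_cast hle
        exact_mod_cast h6
      exact le_trans (Nat.le_self_pow two_ne_zero _) h5
    exact ⟨n, hmem, by funext j; exact (hvj j).symm⟩
  have hfin : S.Finite := Set.Finite.subset (T.finite_toSet.image g) hsub
  refine ⟨hfin, ?_⟩
  have hcard : (S.ncard : ℝ) ≤ T.card := by
    have h1 : S.ncard ≤ (g '' ↑T).ncard :=
      Set.ncard_le_ncard hsub (T.finite_toSet.image g)
    have h2 : (g '' ↑T).ncard ≤ (↑T : Set (Fin k → ℤ)).ncard := Set.ncard_image_le T.finite_toSet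
    have h3 : (↑T : Set (Fin k → ℤ)).ncard = T.card := Set.ncard_coe_finset T
    exact_mod_cast le_trans h1 (h2.trans h3.le)
  have hbase : (12393/320 : ℝ) ≤ (2:ℝ)^(5.5:ℝ) := by
    have hb2 : ((2:ℝ)^(5.5:ℝ))^(2:ℕ) = 2048 := by
      rw [← Real.rpow_natCast ((2:ℝ)^(5.5:ℝ)) 2, ← Real.rpow_mul (by norm_num)]
      norm_num
    have hbnn : (0:ℝ) ≤ (2:ℝ)^(5.5:ℝ) := Real.rpow_nonneg (by norm_num) _
    nlinarith [hb2, hbnn]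
  calc (S.ncard : ℝ) ≤ T.card := hcard
    _ ≤ (3/2)^(6*k) * (17/5)^k := card_T k
    _ = (12393/320 : ℝ)^k := by
        rw [pow_mul, ← mul_pow]
        norm_num
    _ ≤ ((2:ℝ)^(5.5:ℝ))^k := pow_le_pow_left₀ (by norm_num) hbase k
    _ = (2:ℝ)^((5.5:ℝ)*k) := by
        rw [← Real.rpow_natCast ((2:ℝ)^(5.5:ℝ)) k, ← Real.rpow_mul (by norm_num)]
end

section
/- Let p ∈ (0,1] and δ ∈ (0,1), and suppose X ≥ 0 is a sum of independent geometric random variables X₁,…,X_n where each Xᵢ has success probability pᵢ ≥ p. Let μ = E[X] and let λ ∈ (0,1]. Then Pr[X ≤ λ·μ] ≤ exp(−p·μ·(λ − 1 − ln λ)). -/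
open MeasureTheory ProbabilityTheory Finset

section aux

open Real

/-- geometric series facts -/
lemma aux_hasSum_mean {r : ℝ} (h0 : 0 ≤ r) (h1 : r < 1) :
    HasSum (fun m : ℕ => ((m : ℝ) + 1) * (r ^ m * (1 - r))) ((1 - r)⁻¹) := by
  have hr : ‖r‖ < 1 := by rw [Real.norm_eq_abs, abs_of_nonneg h0]; exact h1
  have h2 := (hasSum_coe_mul_geometric_of_norm_lt_one hr).add (hasSum_geometric_of_lt_one h0 h1)
  have h3 := h2.mul_right (1 - r)
  have hne : (1 : ℝ) - r ≠ 0 := by linarith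
  have hfun : (fun m : ℕ => ((m : ℝ) * r ^ m + r ^ m) * (1 - r)) =
      fun m : ℕ => ((m : ℝ) + 1) * (r ^ m * (1 - r)) := by
    funext m; ring
  have hval : (r / (1 - r) ^ 2 + (1 - r)⁻¹) * (1 - r) = (1 - r)⁻¹ := by
    field_simp
    ring_nf
    try tauto
  rwa [hfun, hval] at h3

lemma aux_exp_le_one {x : ℝ} (h : x ≤ 0) : Real.exp x ≤ 1 := by
  rw [← Real.exp_zero]; exact Real.exp_le_exp.2 h

lemma aux_hasSum_mgf {r q : ℝ} (h0 : 0 ≤ r) (h1 : r < 1) (hq0 : 0 < q) (hq1 : q ≤ 1) :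
    HasSum (fun m : ℕ => q ^ (m + 1) * (r ^ m * (1 - r)))
      ((1 - r) * q * (1 - r * q)⁻¹) := by
  have hrq0 : 0 ≤ r * q := mul_nonneg h0 hq0.le
  have hrq1 : r * q < 1 := by nlinarith
  have h2 := (hasSum_geometric_of_lt_one hrq0 hrq1).mul_left ((1 - r) * q)
  have hfun : (fun m : ℕ => (1 - r) * q * (r * q) ^ m) =
      fun m : ℕ => q ^ (m + 1) * (r ^ m * (1 - r)) := by
    funext m; rw [mul_pow, pow_succ]; ring
  rwa [hfun] at h2

/-- Key computation: integral of a nonnegative function against a geometric distribution. -/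
lemma aux_geom_integral {p : ℝ} (hp0 : 0 < p) (hp1 : p ≤ 1) (ν : Measure ℕ)
    [IsProbabilityMeasure ν] (hg : ∀ m : ℕ, ν {m + 1} = ENNReal.ofReal ((1 - p) ^ m * p))
    (f : ℕ → ℝ) (hf0 : ∀ m, 0 ≤ f m) {L : ℝ}
    (hsum : HasSum (fun m => f (m + 1) * ((1 - p) ^ m * p)) L) :
    Integrable f ν ∧ ∫ m, f m ∂ν = L := by
  have hw : ∀ m : ℕ, 0 ≤ (1 - p) ^ m * p :=
    fun m => mul_nonneg (pow_nonneg (by linarith) m) hp0.le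
  -- ν {0} = 0
  have hzero : ν {0} = 0 := by
    have hcompl : (({0} : Set ℕ)ᶜ) = ⋃ m : ℕ, {m + 1} := by
      ext k; cases k <;> simp
    have hdisj : Pairwise (Function.onFun Disjoint fun m : ℕ => ({m + 1} : Set ℕ)) := by
      intro i j hij
      simp only [Function.onFun, Set.disjoint_singleton]
      omega
    have hsum1 : HasSum (fun m : ℕ => (1 - p) ^ m * p) 1 := by
      have h := (hasSum_geometric_of_lt_one (by linarith : (0:ℝ) ≤ 1 - p)
        (by linarith : (1:ℝ) - p < 1)).mul_right p
      have : (1 - (1 - p))⁻¹ * p = 1 := by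
        rw [sub_sub_cancel]
        field_simp
      rwa [this] at h
    have hc : ν (({0} : Set ℕ)ᶜ) = 1 := by
      rw [hcompl, measure_iUnion hdisj fun m => measurableSet_singleton _]
      simp_rw [hg]
      rw [← ENNReal.ofReal_tsum_of_nonneg hw hsum1.summable, hsum1.tsum_eq]
      simp
    have h2 := measure_compl (s := (({0} : Set ℕ)ᶜ))
      (measurableSet_singleton (0 : ℕ)).compl (measure_ne_top ν _)
    rw [compl_compl, hc, measure_univ] at h2
    simpa using h2
  have hval : ∀ m : ℕ, (ν {m + 1}).toReal = (1 - p) ^ m * p := fun m => by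
    rw [hg]; exact ENNReal.toReal_ofReal (hw m)
  -- HasSum for the weighted function
  have hg1 : HasSum (fun m : ℕ => (ν {m + 1}).toReal * f (m + 1)) L := by
    have : (fun m : ℕ => (ν {m + 1}).toReal * f (m + 1)) =
        fun m => f (m + 1) * ((1 - p) ^ m * p) := by
      funext m; rw [hval]; ring
    rwa [this]
  have hgs : HasSum (fun m : ℕ => (ν {m}).toReal * f m) L := by
    have h3 := (hasSum_nat_add_iff (f := fun m : ℕ => (ν {m}).toReal * f m) 1).mp hg1
    simpa [hzero] using h3
  -- Integrability
  have hmeas : Measurable f := measurable_from_top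
  have hfin : HasFiniteIntegral f ν := by
    rw [hasFiniteIntegral_def, lintegral_countable']
    have hterm : ∀ a : ℕ, (‖f a‖₊ : ENNReal) * ν {a} = ENNReal.ofReal (f a) * ν {a} := by
      intro a; rw [← enorm_eq_nnnorm, Real.enorm_eq_ofReal (hf0 a)]
    calc ∑' a : ℕ, (‖f a‖₊ : ENNReal) * ν {a}
        = ∑' a : ℕ, ENNReal.ofReal (f a) * ν {a} := by simp_rw [hterm]
      _ = ENNReal.ofReal (f 0) * ν {0} +
          ∑' a : ℕ, ENNReal.ofReal (f (a + 1)) * ν {a + 1} :=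
          tsum_eq_zero_add' ENNReal.summable
      _ = ∑' a : ℕ, ENNReal.ofReal (f (a + 1) * ((1 - p) ^ a * p)) := by
          rw [hzero, mul_zero, zero_add]
          congr 1; funext a
          rw [hg, ← ENNReal.ofReal_mul (hf0 _)]
      _ = ENNReal.ofReal L := (ENNReal.ofReal_tsum_of_nonneg
            (fun a => mul_nonneg (hf0 _) (hw a)) hsum.summable).symm.trans
            (by rw [hsum.tsum_eq])
      _ < ⊤ := ENNReal.ofReal_lt_top
  have hint : Integrable f ν := ⟨hmeas.aestronglyMeasurable, hfin⟩
  refine ⟨hint, ?_⟩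
  rw [integral_countable' hint]
  simpa [smul_eq_mul, Measure.real] using hgs.tsum_eq

/-- The per-index mgf bound. -/
lemma aux_mgf_bound {p pii lam : ℝ} (hp0 : 0 < p) (hple : p ≤ pii) (hpi1 : pii ≤ 1)
    (hlam0 : 0 < lam) (hlam1 : lam ≤ 1) :
    pii * Real.exp (-(p * (1 / lam - 1))) *
      (1 - (1 - pii) * Real.exp (-(p * (1 / lam - 1))))⁻¹ ≤
      Real.exp (p / pii * Real.log lam) := by
  set t0 : ℝ := p * (1 / lam - 1) with ht0def
  set q : ℝ := Real.exp (-t0) with hqdef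
  have hpii : 0 < pii := lt_of_lt_of_le hp0 hple
  have hinv1 : 1 ≤ 1 / lam := by rw [le_div_iff₀ hlam0]; linarith
  have ht0 : 0 ≤ t0 := mul_nonneg hp0.le (by linarith)
  have hq0 : 0 < q := Real.exp_pos _
  have hq1 : q ≤ 1 := aux_exp_le_one (by linarith)
  have hqt : q * (1 + t0) ≤ 1 := by
    have h1 : 1 + t0 ≤ Real.exp t0 := by
      have := Real.add_one_le_exp t0; linarith
    have h2 : q * (1 + t0) ≤ q * Real.exp t0 := by
      exact mul_le_mul_of_nonneg_left h1 hq0.le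
    rwa [hqdef, ← Real.exp_add, neg_add_cancel, Real.exp_zero] at h2
  have hden : 0 < 1 - (1 - pii) * q := by nlinarith
  -- step 1 : ≤ pii / (pii + t0)
  have hstep1 : pii * q * (1 - (1 - pii) * q)⁻¹ ≤ pii / (pii + t0) := by
    rw [mul_inv_le_iff₀ hden, div_mul_eq_mul_div, le_div_iff₀ (by linarith)]
    nlinarith [mul_le_mul_of_nonneg_left hqt hpii.le]
  -- step 2 : pii / (pii + t0) ≤ exp ((p/pii) * log lam)
  have hstep2 : pii / (pii + t0) ≤ Real.exp (p / pii * Real.log lam) := by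
    set a : ℝ := p / pii with hadef
    have ha0 : 0 < a := div_pos hp0 hpii
    have ha1 : a ≤ 1 := (div_le_one hpii).mpr hple
    have hB := rpow_one_add_le_one_add_mul_self
      (s := 1 / lam - 1) (by linarith) ha0.le ha1
    have hlaminv : (0:ℝ) < 1 / lam := by positivity
    have heq1 : (1 : ℝ) + (1 / lam - 1) = 1 / lam := by ring
    rw [heq1] at hB
    have heq2 : (1 / lam : ℝ) ^ a = Real.exp (-(a * Real.log lam)) := by
      rw [Real.rpow_def_of_pos hlaminv, one_div, Real.log_inv]
      ring_nf
    have heq3 : a * (1 / lam - 1) = t0 / pii := by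
      rw [hadef, ht0def, div_mul_eq_mul_div]
    rw [heq2, heq3] at hB
    -- hB : exp (-(a * log lam)) ≤ 1 + t0 / pii
    have hB2 : Real.exp (-(a * Real.log lam)) * pii ≤ pii + t0 := by
      have := mul_le_mul_of_nonneg_right hB hpii.le
      calc Real.exp (-(a * Real.log lam)) * pii ≤ (1 + t0 / pii) * pii := this
        _ = pii + t0 := by field_simp
    rw [div_le_iff₀ (by linarith)]
    calc pii = Real.exp (a * Real.log lam) * (Real.exp (-(a * Real.log lam)) * pii) := by
          rw [← mul_assoc, ← Real.exp_add, add_neg_cancel, Real.exp_zero, one_mul]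
      _ ≤ Real.exp (a * Real.log lam) * (pii + t0) :=
          mul_le_mul_of_nonneg_left hB2 (Real.exp_pos _).le
  exact hstep1.trans hstep2

end aux

theorem stmt_19 {Ω : Type*} [MeasureSpace Ω] [IsProbabilityMeasure (ℙ : Measure Ω)]
    (n : ℕ) (hn : 0 < n)
    (p : ℝ) (hp0 : 0 < p) (hp1 : p ≤ 1)
    (δ : ℝ) (hδ0 : 0 < δ) (hδ1 : δ < 1)
    (pi : Fin n → ℝ) (hpi_ge : ∀ i, p ≤ pi i) (hpi_le : ∀ i, pi i ≤ 1)
    (X : Fin n → Ω → ℕ) (hXm : ∀ i, Measurable (X i))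
    (hindep : iIndepFun X ℙ)
    -- each `X i` is geometric with success probability `pi i`, counting trials up to
    -- and including the first success
    (hgeom : ∀ (i : Fin n) (m : ℕ),
      ℙ {ω | X i ω = m + 1} = ENNReal.ofReal ((1 - pi i) ^ m * pi i))
    (lam : ℝ) (hlam0 : 0 < lam) (hlam1 : lam ≤ 1)
    (μ : ℝ) (hμ : μ = ∫ ω, (∑ i, (X i ω : ℝ)) ∂ℙ) :
    ℙ {ω | (∑ i, (X i ω : ℝ)) ≤ lam * μ} ≤
      ENNReal.ofReal (Real.exp (-p * μ * (lam - 1 - Real.log lam))) := by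
  have hpii : ∀ i, 0 < pi i := fun i => lt_of_lt_of_le hp0 (hpi_ge i)
  -- real-valued random variables
  set Y : Fin n → Ω → ℝ := fun i ω => (X i ω : ℝ) with hYdef
  have hYm : ∀ i, Measurable (Y i) := fun i =>
    (measurable_from_top (f := fun k : ℕ => (k : ℝ))).comp (hXm i)
  have hYindep : iIndepFun Y ℙ :=
    hindep.comp (fun _ (k : ℕ) => (k : ℝ)) (fun _ => measurable_from_top)
  -- distribution of X i
  set ν : Fin n → Measure ℕ := fun i => Measure.map (X i) ℙ with hνdef
  have hνprob : ∀ i, IsProbabilityMeasure (ν i) := fun i =>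
    Measure.isProbabilityMeasure_map (hXm i).aemeasurable
  have hνg : ∀ i m, ν i {m + 1} = ENNReal.ofReal ((1 - pi i) ^ m * pi i) := by
    intro i m
    rw [hνdef, Measure.map_apply (hXm i) (measurableSet_singleton _)]
    have : X i ⁻¹' {m + 1} = {ω | X i ω = m + 1} := by ext ω; simp
    rw [this, hgeom]
  -- mean of each Y i
  have hmean : ∀ i, Integrable (Y i) ℙ ∧ ∫ ω, Y i ω ∂ℙ = (pi i)⁻¹ := by
    intro i
    have := hνprob i
    have hs : HasSum (fun m : ℕ => (((m + 1 : ℕ) : ℝ)) * ((1 - pi i) ^ m * pi i))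
        ((pi i)⁻¹) := by
      have h := aux_hasSum_mean (r := 1 - pi i) (by linarith [hpi_le i]) (by linarith [hpii i])
      have h1 : (1 : ℝ) - (1 - pi i) = pi i := by ring
      rw [h1] at h
      have : (fun m : ℕ => ((m : ℝ) + 1) * ((1 - pi i) ^ m * pi i)) =
          fun m : ℕ => (((m + 1 : ℕ) : ℝ)) * ((1 - pi i) ^ m * pi i) := by
        funext m; push_cast; ring
      rwa [this] at h
    have hkey := aux_geom_integral (hpii i) (hpi_le i) (ν i) (hνg i)
      (fun m => (m : ℝ)) (fun m => Nat.cast_nonneg m) hs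
    have hasm : AEStronglyMeasurable (fun k : ℕ => (k : ℝ)) (ν i) :=
      (measurable_from_top).aestronglyMeasurable
    constructor
    · have := (integrable_map_measure hasm (hXm i).aemeasurable).mp hkey.1
      exact this
    · calc ∫ ω, Y i ω ∂ℙ = ∫ k, (k : ℝ) ∂(ν i) :=
            (integral_map (hXm i).aemeasurable hasm).symm
        _ = (pi i)⁻¹ := hkey.2
  have hYint : ∀ i, Integrable (Y i) ℙ := fun i => (hmean i).1
  -- value of μ
  have hμval : μ = ∑ i, (pi i)⁻¹ := by
    rw [hμ]
    have : (fun ω => ∑ i, (X i ω : ℝ)) = fun ω => ∑ i, Y i ω := rfl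
    rw [this, integral_finset_sum univ (fun i _ => hYint i)]
    exact Finset.sum_congr rfl fun i _ => (hmean i).2
  -- Chernoff setup
  set t0 : ℝ := p * (1 / lam - 1) with ht0def
  have hinv1 : 1 ≤ 1 / lam := by rw [le_div_iff₀ hlam0]; linarith
  have ht0 : 0 ≤ t0 := mul_nonneg hp0.le (by linarith)
  set t : ℝ := -t0 with htdef
  have ht : t ≤ 0 := by rw [htdef]; linarith
  set S : Ω → ℝ := ∑ i, Y i with hSdef
  have hSm : Measurable S := by
    rw [hSdef, show (∑ i, Y i) = (fun ω => ∑ i, Y i ω) from funext fun ω => by simp]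
    exact Finset.measurable_sum univ fun i _ => hYm i
  have hSnn : ∀ ω, 0 ≤ S ω := by
    intro ω
    rw [hSdef]
    simp only [Finset.sum_apply]
    exact Finset.sum_nonneg fun i _ => Nat.cast_nonneg _
  have hexp_le_one : ∀ ω, Real.exp (t * S ω) ≤ 1 := by
    intro ω
    have : t * S ω ≤ 0 := mul_nonpos_iff.mpr (Or.inr ⟨ht, hSnn ω⟩)
    exact aux_exp_le_one this
  have hSint : Integrable (fun ω => Real.exp (t * S ω)) ℙ := by
    refine (integrable_const (1 : ℝ)).mono'
      ((hSm.const_mul t).exp.aestronglyMeasurable) ?_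
    exact ae_of_all _ fun ω => by
      rw [Real.norm_eq_abs, abs_of_pos (Real.exp_pos _)]; exact hexp_le_one ω
  -- Chernoff bound
  have hcher := measure_le_le_exp_mul_mgf (μ := ℙ) (X := S) (lam * μ) ht hSint
  -- mgf of each Y i
  have hmgf : ∀ i, mgf (Y i) ℙ t =
      pi i * Real.exp t * (1 - (1 - pi i) * Real.exp t)⁻¹ := by
    intro i
    have := hνprob i
    have hq0 : 0 < Real.exp t := Real.exp_pos _
    have hq1 : Real.exp t ≤ 1 := aux_exp_le_one ht
    have hs := aux_hasSum_mgf (r := 1 - pi i) (q := Real.exp t)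
      (by linarith [hpi_le i]) (by linarith [hpii i]) hq0 hq1
    have h1 : (1 : ℝ) - (1 - pi i) = pi i := by ring
    rw [h1] at hs
    have hfun : (fun m : ℕ => Real.exp t ^ (m + 1) * ((1 - pi i) ^ m * pi i)) =
        fun m : ℕ => Real.exp (t * ((m + 1 : ℕ) : ℝ)) * ((1 - pi i) ^ m * pi i) := by
      funext m
      rw [mul_comm t, ← Real.exp_nat_mul]
    rw [hfun] at hs
    have hkey := aux_geom_integral (hpii i) (hpi_le i) (ν i) (hνg i)
      (fun m : ℕ => Real.exp (t * (m : ℝ))) (fun m => (Real.exp_pos _).le) hs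
    have hasm : AEStronglyMeasurable (fun k : ℕ => Real.exp (t * (k : ℝ))) (ν i) :=
      (measurable_from_top).aestronglyMeasurable
    have hmap := integral_map (hXm i).aemeasurable hasm
    rw [mgf]
    calc ∫ ω, Real.exp (t * Y i ω) ∂ℙ
        = ∫ k, Real.exp (t * (k : ℝ)) ∂(ν i) := hmap.symm
      _ = pi i * Real.exp t * (1 - (1 - pi i) * Real.exp t)⁻¹ := by
          rw [hkey.2]
  -- bound the mgf product
  have hmgfS : mgf S ℙ t = ∏ i, mgf (Y i) ℙ t := hYindep.mgf_sum hYm univ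
  have hprod : ∏ i, mgf (Y i) ℙ t ≤ Real.exp (p * μ * Real.log lam) := by
    have hbound : ∀ i ∈ univ, mgf (Y i) ℙ t ≤ Real.exp (p / pi i * Real.log lam) := by
      intro i _
      rw [hmgf i]
      have := aux_mgf_bound hp0 (hpi_ge i) (hpi_le i) hlam0 hlam1
      rwa [htdef, ht0def]
    calc ∏ i, mgf (Y i) ℙ t ≤ ∏ i, Real.exp (p / pi i * Real.log lam) :=
          Finset.prod_le_prod (fun i _ => mgf_nonneg) hbound
      _ = Real.exp (∑ i, p / pi i * Real.log lam) := (Real.exp_sum _ _).symm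
      _ = Real.exp (p * μ * Real.log lam) := by
          congr 1
          rw [hμval, Finset.mul_sum, Finset.sum_mul]
          exact Finset.sum_congr rfl fun i _ => by
            rw [div_eq_mul_inv]
  -- put everything together
  have hfinal : Real.exp (-t * (lam * μ)) * mgf S ℙ t ≤
      Real.exp (-p * μ * (lam - 1 - Real.log lam)) := by
    rw [hmgfS]
    calc Real.exp (-t * (lam * μ)) * ∏ i, mgf (Y i) ℙ t
        ≤ Real.exp (-t * (lam * μ)) * Real.exp (p * μ * Real.log lam) :=
          mul_le_mul_of_nonneg_left hprod (Real.exp_pos _).le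
      _ = Real.exp (-t * (lam * μ) + p * μ * Real.log lam) := (Real.exp_add _ _).symm
      _ = Real.exp (-p * μ * (lam - 1 - Real.log lam)) := by
          congr 1
          rw [htdef, ht0def, neg_neg]
          field_simp
          ring
  have hset : {ω | (∑ i, (X i ω : ℝ)) ≤ lam * μ} = {ω | S ω ≤ lam * μ} := by
    ext ω; simp [hSdef, hYdef]
  rw [hset]
  have hmeas_ne_top : ℙ {ω | S ω ≤ lam * μ} ≠ ⊤ := measure_ne_top _ _
  rw [← ENNReal.ofReal_toReal hmeas_ne_top]
  exact ENNReal.ofReal_le_ofReal (hcher.trans hfinal)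
end
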